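/- Let (V,φ) be a topological flow with completely positive topological entropy and V ≠ 0. Then: (a) V has no proper open φ-invariant 𝕂-subspaces; (b) every finite coindependent set of proper closed φ-invariant 𝕂-subspaces of V has cardinality at most ent*(V,φ). -/

import Mathlib

open scoped ENNReal

/-- A topological `𝕂`-vector space `V` is *linearly compact* if it is Hausdorff, has a
neighbourhood basis at `0` consisting of open `𝕂`-subspaces, and every family of closed
affine subspaces (cosets of closed `𝕂`-subspaces) with the finite intersection property
has nonempty intersection. -/
def IsLinearlyCompact (𝕂 V : Type*) [Field 𝕂] [AddCommGroup V] [Module 𝕂 V]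
    [TopologicalSpace V] : Prop :=
  T2Space V ∧
  (∀ S ∈ nhds (0 : V), ∃ U : Submodule 𝕂 V, IsOpen (U : Set V) ∧ (U : Set V) ⊆ S) ∧
  ∀ (ι : Type) (N : ι → Submodule 𝕂 V) (v : ι → V),
    (∀ i, IsClosed ((N i : Set V))) →
    (∀ F : Finset ι, (⋂ i ∈ F, ((v i + ·) '' (N i : Set V))).Nonempty) →
    (⋂ i, ((v i + ·) '' (N i : Set V))).Nonempty

/-- A family of proper `𝕂`-subspaces `N i` of `V` is *coindependent* if for every finite
set `F` of indices and every `i ∈ F`, `N i + ⋂_{j ∈ F, j ≠ i} N j = V`. -/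
def Coindependent (𝕂 : Type*) {V ι : Type*} [Field 𝕂] [AddCommGroup V] [Module 𝕂 V]
    (N : ι → Submodule 𝕂 V) : Prop :=
  ∀ (F : Finset ι) (i : ι), i ∈ F → N i ⊔ (⨅ j ∈ F, ⨅ _ : j ≠ i, N j) = ⊤

/-- `Cn φ U n = U ∩ φ⁻¹U ∩ ⋯ ∩ φ⁻⁽ⁿ⁻¹⁾U`. -/
noncomputable def Cn {𝕂 V : Type*} [Field 𝕂] [AddCommGroup V] [Module 𝕂 V]
    (φ : V →ₗ[𝕂] V) (U : Submodule 𝕂 V) (n : ℕ) : Submodule 𝕂 V :=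
  ⨅ k ∈ Finset.range n, Submodule.comap (φ ^ k) U

/-- The `φ`-cotrajectory `C(φ,U) = ⋂_{n ∈ ℕ} φ⁻ⁿU = ⋂_{n ≥ 1} C_n(φ,U)`. -/
noncomputable def Cotraj {𝕂 V : Type*} [Field 𝕂] [AddCommGroup V] [Module 𝕂 V]
    (φ : V →ₗ[𝕂] V) (U : Submodule 𝕂 V) : Submodule 𝕂 V :=
  ⨅ k : ℕ, Submodule.comap (φ ^ k) U

/-- `H*(φ,U) = lim_{n→∞} (1/n)·dim_𝕂 (U / C_n(φ,U))`, realized as a limsup in `ℝ≥0∞`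
(the limit exists, so it coincides with the limsup). -/
noncomputable def HStar {𝕂 V : Type*} [Field 𝕂] [AddCommGroup V] [Module 𝕂 V]
    (φ : V →ₗ[𝕂] V) (U : Submodule 𝕂 V) : ℝ≥0∞ :=
  Filter.atTop.limsup fun n : ℕ =>
    (((Module.rank 𝕂 (↥U ⧸ Submodule.comap U.subtype (Cn φ U n))).toENat : ℕ∞) : ℝ≥0∞) /
      (n : ℝ≥0∞)

/-- The topological entropy `ent*(V,φ) = sup_U H*(φ,U)`, the supremum ranging over all
open `𝕂`-subspaces `U` of `V`. -/
noncomputable def entStar (𝕂 V : Type*) [Field 𝕂] [AddCommGroup V] [Module 𝕂 V]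
    [TopologicalSpace V] (φ : V →ₗ[𝕂] V) : ℝ≥0∞ :=
  ⨆ (U : Submodule 𝕂 V) (_ : IsOpen (U : Set V)), HStar φ U

/-- A topological flow `(V,φ)` has *completely positive topological entropy* if
`ent*(V/Z, φ̄) ≠ 0` for every proper closed `φ`-invariant `𝕂`-subspace `Z` of `V`,
where `φ̄` is induced by `φ`. -/
def CompletelyPositiveEntStar (𝕂 V : Type*) [Field 𝕂] [AddCommGroup V] [Module 𝕂 V]
    [TopologicalSpace V] (φ : V →ₗ[𝕂] V) : Prop :=
  ∀ (Z : Submodule 𝕂 V), IsClosed (Z : Set V) → ∀ hinv : Z ≤ Z.comap φ, Z ≠ ⊤ →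
    entStar 𝕂 (V ⧸ Z) (Submodule.mapQ Z Z φ hinv) ≠ 0

/-! ### Auxiliary lemmas -/

set_option maxHeartbeats 1000000
set_option synthInstance.maxHeartbeats 400000

section CnLemmas
variable {𝕂 V : Type*} [Field 𝕂] [AddCommGroup V] [Module 𝕂 V]
  (φ : V →ₗ[𝕂] V) (U : Submodule 𝕂 V)

lemma mem_Cn {n : ℕ} {x : V} : x ∈ Cn φ U n ↔ ∀ k < n, (φ ^ k) x ∈ U := by
  simp [Cn, Submodule.mem_iInf]

lemma Cn_antitone : Antitone (Cn φ U) := by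
  intro m n hmn x hx
  rw [mem_Cn] at hx ⊢
  exact fun k hk => hx k (lt_of_lt_of_le hk hmn)

lemma Cn_one : Cn φ U 1 = U := by
  ext x; simp [mem_Cn, Nat.lt_one_iff]

lemma Cn_le_self {n : ℕ} (hn : 1 ≤ n) : Cn φ U n ≤ U :=
  le_trans (Cn_antitone φ U hn) (le_of_eq (Cn_one φ U))

lemma Cn_succ_of_eq {m : ℕ} (h : Cn φ U (m + 1) = Cn φ U m) :
    Cn φ U (m + 2) = Cn φ U (m + 1) := by
  refine le_antisymm (Cn_antitone φ U (by omega)) ?_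
  intro x hx
  have hφx : φ x ∈ Cn φ U m := by
    rw [mem_Cn]
    intro k hk
    have : (φ ^ (k+1)) x ∈ U := (mem_Cn φ U).1 hx (k+1) (by omega)
    simpa [pow_succ, Module.End.mul_apply] using this
  rw [← h] at hφx
  rw [mem_Cn]
  intro k hk
  rcases Nat.eq_zero_or_pos k with rfl | hkpos
  · simpa using (mem_Cn φ U).1 hx 0 (by omega)
  · obtain ⟨j, rfl⟩ := Nat.exists_eq_add_of_le hkpos
    have := (mem_Cn φ U).1 hφx j (by omega)
    simpa [add_comm 1 j, pow_succ, Module.End.mul_apply] using this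

lemma Cn_eventually_const {m : ℕ} (h : Cn φ U (m + 1) = Cn φ U m) :
    ∀ j, Cn φ U (m + j) = Cn φ U m := by
  have step : ∀ j, Cn φ U (m + j + 1) = Cn φ U (m + j) := by
    intro j
    induction j with
    | zero => simpa using h
    | succ j ih =>
        have := Cn_succ_of_eq φ U (m := m + j) ih
        have e1 : m + (j+1) + 1 = m + j + 2 := by omega
        have e2 : m + (j+1) = m + j + 1 := by omega
        rw [e1, e2]; exact this
  intro j
  induction j with
  | zero => rfl
  | succ j ih => rw [Nat.add_succ, step j, ih]

lemma mapQ_pow (Z : Submodule 𝕂 V) (h : Z ≤ Z.comap φ) (k : ℕ) (x : V) :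
    ((Submodule.mapQ Z Z φ h) ^ k) (Submodule.Quotient.mk x) =
      Submodule.Quotient.mk ((φ ^ k) x) := by
  induction k generalizing x with
  | zero => simp
  | succ k ih =>
      rw [pow_succ, pow_succ, Module.End.mul_apply, Module.End.mul_apply,
        Submodule.mapQ_apply, ih]

end CnLemmas

section RankLemmas
variable {𝕂 M : Type*} [Field 𝕂] [AddCommGroup M] [Module 𝕂 M]

lemma rank_quot_mono {A B : Submodule 𝕂 M} (h : A ≤ B) :
    Module.rank 𝕂 (M ⧸ B) ≤ Module.rank 𝕂 (M ⧸ A) := by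
  have hs : Function.Surjective (Submodule.mapQ A B LinearMap.id (by simpa using h)) := by
    intro y
    obtain ⟨x, rfl⟩ := Submodule.Quotient.mk_surjective B y
    exact ⟨Submodule.Quotient.mk x, by simp [Submodule.mapQ_apply]⟩
  exact LinearMap.rank_le_of_surjective _ hs

lemma tendsto_const_div_nat (c : ℝ≥0∞) (hc : c ≠ ⊤) :
    Filter.Tendsto (fun n : ℕ => c / (n : ℝ≥0∞)) Filter.atTop (nhds 0) := by
  simp_rw [div_eq_mul_inv]
  simpa using ENNReal.Tendsto.const_mul (a := c) ENNReal.tendsto_inv_nat_nhds_zero (Or.inr hc)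

end RankLemmas

section Key
variable {𝕂 V : Type*} [Field 𝕂] [AddCommGroup V] [Module 𝕂 V]

lemma key_rank_lb (φ : V →ₗ[𝕂] V) (U : Submodule 𝕂 V) (h : HStar φ U ≠ 0) (n : ℕ) :
    (n : Cardinal) ≤ Module.rank 𝕂 (↥U ⧸ Submodule.comap U.subtype (Cn φ U (n + 1))) := by
  set Q := ↥U ⧸ Submodule.comap U.subtype (Cn φ U (n + 1)) with hQ
  by_cases hfin : Module.rank 𝕂 Q < Cardinal.aleph0
  swap
  · exact le_trans (Cardinal.nat_lt_aleph0 n).le (le_of_not_gt hfin)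
  haveI hQfin : Module.Finite 𝕂 Q := (Module.rank_lt_aleph0_iff).1 hfin
  have hql : ∀ m, m ≤ n + 1 → Module.rank 𝕂 (↥U ⧸ Submodule.comap U.subtype (Cn φ U m))
      < Cardinal.aleph0 := by
    intro m hm
    refine lt_of_le_of_lt ?_ hfin
    exact rank_quot_mono (Submodule.comap_mono (Cn_antitone φ U hm))
  have strict : ∀ m, 1 ≤ m → m ≤ n → Cn φ U (m + 1) < Cn φ U m := by
    intro m hm1 hmn
    rcases lt_or_eq_of_le (Cn_antitone φ U (Nat.le_succ m)) with hlt | heq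
    · exact hlt
    exfalso
    have hconst : ∀ j, m ≤ j → Cn φ U j = Cn φ U m := by
      intro j hj
      obtain ⟨i, rfl⟩ := Nat.exists_eq_add_of_le hj
      exact Cn_eventually_const φ U heq i
    set c : ℝ≥0∞ := ((Module.rank 𝕂 (↥U ⧸ Submodule.comap U.subtype (Cn φ U m))).toENat : ℝ≥0∞)
      with hc
    have hx : (Module.rank 𝕂 (↥U ⧸ Submodule.comap U.subtype (Cn φ U m))).toENat ≠ ⊤ := by
      rw [ne_eq, Cardinal.toENat_eq_top]
      exact not_le.2 (hql m (by omega))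
    obtain ⟨k, hk⟩ := WithTop.ne_top_iff_exists.1 hx
    have hcne : c ≠ ⊤ := by
      rw [hc, ← hk]
      exact fun hcontra => (WithTop.coe_ne_top (a := k))
        (ENat.toENNReal_strictMono.injective (hcontra.trans ENat.toENNReal_top.symm))
    have hT : Filter.Tendsto (fun j : ℕ =>
        (((Module.rank 𝕂 (↥U ⧸ Submodule.comap U.subtype (Cn φ U j))).toENat : ℕ∞) : ℝ≥0∞) /
        (j : ℝ≥0∞)) Filter.atTop (nhds 0) := by
      refine Filter.Tendsto.congr' ?_ (tendsto_const_div_nat c hcne)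
      filter_upwards [Filter.eventually_ge_atTop m] with j hj
      rw [hconst j hj]
    exact h (hT.limsup_eq)
  have hfd : ∀ m, m ≤ n + 1 → Module.Finite 𝕂 (↥U ⧸ Submodule.comap U.subtype (Cn φ U m)) :=
    fun m hm => (Module.rank_lt_aleph0_iff).1 (hql m hm)
  have step : ∀ m, 1 ≤ m → m ≤ n →
      Module.finrank 𝕂 (↥U ⧸ Submodule.comap U.subtype (Cn φ U m)) <
      Module.finrank 𝕂 (↥U ⧸ Submodule.comap U.subtype (Cn φ U (m + 1))) := by
    intro m hm1 hmn
    set A := Submodule.comap U.subtype (Cn φ U (m + 1)) with hA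
    set B := Submodule.comap U.subtype (Cn φ U m) with hB
    have hAB : A ≤ B := Submodule.comap_mono (Cn_antitone φ U (Nat.le_succ m))
    haveI : Module.Finite 𝕂 (↥U ⧸ A) := hfd (m+1) (by omega)
    obtain ⟨x, hxm, hxm1⟩ := SetLike.exists_of_lt (strict m hm1 hmn)
    have hxU : x ∈ U := Cn_le_self φ U hm1 hxm
    set p := B.map A.mkQ with hp
    have hpne : p ≠ ⊥ := by
      intro hbot
      have hmem : Submodule.Quotient.mk (⟨x, hxU⟩ : ↥U) ∈ p :=
        Submodule.mem_map_of_mem (by simpa [hB, Submodule.mem_comap] using hxm)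
      rw [hbot, Submodule.mem_bot] at hmem
      rw [Submodule.Quotient.mk_eq_zero] at hmem
      exact hxm1 (by simpa [hA, Submodule.mem_comap] using hmem)
    haveI : Module.Finite 𝕂 ↥p := inferInstance
    have hiso := (Submodule.quotientQuotientEquivQuotient A B hAB).finrank_eq
    have hadd := Submodule.finrank_quotient_add_finrank p
    have hq : Module.finrank 𝕂 (↥U ⧸ B) + Module.finrank 𝕂 ↥p = Module.finrank 𝕂 (↥U ⧸ A) := by
      rw [← hiso]; exact hadd
    have hppos : 0 < Module.finrank 𝕂 ↥p := by
      rcases Nat.eq_zero_or_pos (Module.finrank 𝕂 ↥p) with h0 | h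
      · exact absurd (Submodule.finrank_eq_zero.1 h0) hpne
      · exact h
    omega
  have chain : ∀ m, m ≤ n →
      m ≤ Module.finrank 𝕂 (↥U ⧸ Submodule.comap U.subtype (Cn φ U (m + 1))) := by
    intro m
    induction m with
    | zero => intro _; exact Nat.zero_le _
    | succ m ih =>
        intro hm
        have h1 := ih (by omega)
        have h2 := step (m+1) (by omega) hm
        omega
  have := chain n le_rfl
  calc (n : Cardinal) ≤ (Module.finrank 𝕂 Q : Cardinal) := by exact_mod_cast this
    _ = Module.rank 𝕂 Q := Module.finrank_eq_rank 𝕂 Q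

end Key

section CRT
variable {𝕂 V : Type*} [Field 𝕂] [AddCommGroup V] [Module 𝕂 V]

lemma crt {ι : Type*} [Fintype ι] (N : ι → Submodule 𝕂 V) (hco : Coindependent 𝕂 N)
    (x : ι → V) : ∃ v : V, ∀ i, v - x i ∈ N i := by
  classical
  have hx : ∀ i, ∃ a ∈ N i, ∃ c ∈ (⨅ j ∈ (Finset.univ : Finset ι), ⨅ _ : j ≠ i, N j),
      a + c = x i := by
    intro i
    have := hco Finset.univ i (Finset.mem_univ i)
    have hxi : x i ∈ N i ⊔ (⨅ j ∈ (Finset.univ : Finset ι), ⨅ _ : j ≠ i, N j) := by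
      rw [this]; trivial
    exact Submodule.mem_sup.1 hxi
  choose a ha c hc hac using hx
  refine ⟨∑ j, c j, fun i => ?_⟩
  have hsum : ∑ j, c j = c i + ∑ j ∈ Finset.univ.erase i, c j :=
    (Finset.add_sum_erase _ _ (Finset.mem_univ i)).symm
  rw [hsum, ← hac i]
  have hrw : c i + ∑ j ∈ Finset.univ.erase i, c j - (a i + c i) =
      (∑ j ∈ Finset.univ.erase i, c j) - a i := by abel
  rw [hrw]
  refine sub_mem (Submodule.sum_mem _ fun j hj => ?_) (ha i)
  have hji : j ≠ i := Finset.ne_of_mem_erase hj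
  have := hc j
  simp only [Submodule.mem_iInf] at this
  exact this i (Finset.mem_univ i) (Ne.symm hji)

end CRT
section PartA
variable {𝕂 V : Type*} [Field 𝕂] [AddCommGroup V] [Module 𝕂 V]
  [TopologicalSpace V] [IsTopologicalAddGroup V]

lemma finite_quotient_of_isOpen (hV : IsLinearlyCompact 𝕂 V) (U : Submodule 𝕂 V)
    (hU : IsOpen (U : Set V)) : Module.Finite 𝕂 (V ⧸ U) := by
  classical
  by_contra hinf
  set Q := V ⧸ U with hQdef
  set b := Module.Basis.ofVectorSpace 𝕂 Q with hb
  haveI : Infinite ↥(Module.Basis.ofVectorSpaceIndex 𝕂 Q) := by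
    rw [← not_finite_iff_infinite]
    intro hfin
    exact hinf (Module.Finite.of_basis b)
  set e := Infinite.natEmbedding ↥(Module.Basis.ofVectorSpaceIndex 𝕂 Q) with he
  set g : ℕ → (V →ₗ[𝕂] 𝕂) := fun i => (b.coord (e i)).comp U.mkQ with hg
  set N : ℕ → Submodule 𝕂 V := fun i => LinearMap.ker (g i) with hN
  have hUN : ∀ i, U ≤ N i := by
    intro i u hu
    have : U.mkQ u = 0 := by
      rw [Submodule.mkQ_apply, Submodule.Quotient.mk_eq_zero]; exact hu
    simp [hN, hg, LinearMap.mem_ker, this]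
  have hNclosed : ∀ i, IsClosed ((N i : Set V)) := by
    intro i
    have hopen : IsOpen ((N i : Set V)) :=
      AddSubgroup.isOpen_mono (H₁ := U.toAddSubgroup) (H₂ := (N i).toAddSubgroup) (hUN i) hU
    exact AddSubgroup.isClosed_of_isOpen (N i).toAddSubgroup hopen
  have hv : ∀ i : ℕ, ∃ w : V, U.mkQ w = b (e i) := fun i =>
    Submodule.Quotient.mk_surjective U (b (e i))
  choose v hvv using hv
  have hgv : ∀ i j : ℕ, g i (v j) = if j = i then 1 else 0 := by
    intro i j
    have : g i (v j) = b.coord (e i) (b (e j)) := by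
      show b.coord (e i) (U.mkQ (v j)) = _
      rw [hvv j]
    rw [this, Module.Basis.coord_apply, Module.Basis.repr_self_apply]
    simp [e.injective.eq_iff]
  have hFIP : ∀ F : Finset ℕ, (⋂ i ∈ F, ((v i + ·) '' (N i : Set V))).Nonempty := by
    intro F
    refine ⟨∑ j ∈ F, v j, ?_⟩
    simp only [Set.mem_iInter]
    intro i hi
    refine ⟨∑ j ∈ F.erase i, v j, ?_, Finset.add_sum_erase F v hi⟩
    have : g i (∑ j ∈ F.erase i, v j) = 0 := by
      rw [map_sum]
      simp only [hgv]
      rw [Finset.sum_ite_eq' (F.erase i) i (fun _ => (1:𝕂))]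
      simp [Finset.mem_erase]
    simpa [hN, LinearMap.mem_ker] using this
  obtain ⟨x, hx⟩ := hV.2.2 ℕ N v hNclosed hFIP
  simp only [Set.mem_iInter] at hx
  have hgx : ∀ i, g i x = 1 := by
    intro i
    obtain ⟨y, hy, hxy⟩ := hx i
    have hxy' : v i + y = x := hxy
    have : g i x = g i (v i) + g i y := by rw [← map_add, hxy']
    rw [this, hgv i i]
    simpa using (LinearMap.mem_ker.1 hy)
  have hsupp : ∀ i : ℕ, e i ∈ (b.repr (U.mkQ x)).support := by
    intro i
    rw [Finsupp.mem_support_iff]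
    have : g i x = b.repr (U.mkQ x) (e i) := rfl
    rw [← this, hgx i]
    exact one_ne_zero
  have hsub : Set.range (fun i => e i) ⊆ ((b.repr (U.mkQ x)).support : Set _) := by
    rintro _ ⟨i, rfl⟩; exact hsupp i
  exact Set.infinite_range_of_injective e.injective
    (Set.Finite.subset (Finset.finite_toSet _) hsub)

lemma entStar_eq_zero_of_finite {M : Type*} [AddCommGroup M] [Module 𝕂 M] [TopologicalSpace M]
    [Module.Finite 𝕂 M] (ψ : M →ₗ[𝕂] M) : entStar 𝕂 M ψ = 0 := by
  refine le_antisymm ?_ zero_le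
  refine iSup₂_le fun Uo hUo => ?_
  set d := Module.finrank 𝕂 M with hd
  have hbound : ∀ j : ℕ,
      (((Module.rank 𝕂 (↥Uo ⧸ Submodule.comap Uo.subtype (Cn ψ Uo j))).toENat : ℕ∞) : ℝ≥0∞) /
        (j : ℝ≥0∞) ≤ (d : ℝ≥0∞) / (j : ℝ≥0∞) := by
    intro j
    refine ENNReal.div_le_div_right ?_ _
    have h1 : Module.rank 𝕂 (↥Uo ⧸ Submodule.comap Uo.subtype (Cn ψ Uo j)) ≤ (d : Cardinal) := by
      calc Module.rank 𝕂 (↥Uo ⧸ Submodule.comap Uo.subtype (Cn ψ Uo j))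
          ≤ Module.rank 𝕂 ↥Uo := rank_quotient_le _
        _ ≤ Module.rank 𝕂 M := Submodule.rank_le Uo
        _ = (d : Cardinal) := (Module.finrank_eq_rank 𝕂 M).symm
    have h2 : (Module.rank 𝕂 (↥Uo ⧸ Submodule.comap Uo.subtype (Cn ψ Uo j))).toENat ≤
        (d : ℕ∞) := Cardinal.toENat_le_nat.2 h1
    calc (((Module.rank 𝕂 (↥Uo ⧸ Submodule.comap Uo.subtype (Cn ψ Uo j))).toENat : ℕ∞) : ℝ≥0∞)
        ≤ ((d : ℕ∞) : ℝ≥0∞) := ENat.toENNReal_le.2 h2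
      _ = (d : ℝ≥0∞) := by simp
  have hT : Filter.Tendsto (fun j : ℕ => (d : ℝ≥0∞) / (j : ℝ≥0∞)) Filter.atTop (nhds 0) :=
    tendsto_const_div_nat _ (ENNReal.natCast_ne_top d)
  have hls : Filter.atTop.limsup (fun j : ℕ => (d : ℝ≥0∞) / (j : ℝ≥0∞)) = 0 := hT.limsup_eq
  calc HStar ψ Uo ≤ Filter.atTop.limsup (fun j : ℕ => (d : ℝ≥0∞) / (j : ℝ≥0∞)) :=
        Filter.limsup_le_limsup (Filter.Eventually.of_forall hbound)
    _ = 0 := hls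

end PartA
section PartB
universe uK uV
variable {𝕂 : Type uK} {V : Type uV} [Field 𝕂] [AddCommGroup V] [Module 𝕂 V]

lemma rank_prod_le {ι : Type uV} [Fintype ι] (φ : V →ₗ[𝕂] V) (N : ι → Submodule 𝕂 V)
    (hinv : ∀ i, N i ≤ (N i).comap φ) (hco : Coindependent 𝕂 N)
    (Uo : ∀ i, Submodule 𝕂 (V ⧸ N i)) (m : ℕ) :
    Module.rank 𝕂 (Π i, (↥(Uo i) ⧸ Submodule.comap (Uo i).subtype
        (Cn (Submodule.mapQ (N i) (N i) φ (hinv i)) (Uo i) m))) ≤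
    Module.rank 𝕂 (↥(⨅ i, Submodule.comap (N i).mkQ (Uo i)) ⧸
      Submodule.comap (⨅ i, Submodule.comap (N i).mkQ (Uo i)).subtype
        (Cn φ (⨅ i, Submodule.comap (N i).mkQ (Uo i)) m)) := by
  set W : Submodule 𝕂 V := ⨅ i, Submodule.comap (N i).mkQ (Uo i) with hW
  set ψ : ∀ i, (V ⧸ N i) →ₗ[𝕂] (V ⧸ N i) := fun i => Submodule.mapQ (N i) (N i) φ (hinv i)
    with hψ
  have hWle : ∀ i, W ≤ Submodule.comap (N i).mkQ (Uo i) := fun i => iInf_le _ i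
  have hmem : ∀ (x : ↥W) (i : ι), (N i).mkQ (x : V) ∈ Uo i := fun x i => hWle i x.2
  set toU : ∀ i, ↥W →ₗ[𝕂] ↥(Uo i) := fun i =>
    LinearMap.codRestrict (Uo i) (((N i).mkQ).comp W.subtype) (fun x => hmem x i) with htoU
  set f : ↥W →ₗ[𝕂] Π i, (↥(Uo i) ⧸ Submodule.comap (Uo i).subtype (Cn (ψ i) (Uo i) m)) :=
    LinearMap.pi (fun i =>
      ((Submodule.comap (Uo i).subtype (Cn (ψ i) (Uo i) m)).mkQ).comp (toU i)) with hf
  have hker : Submodule.comap W.subtype (Cn φ W m) ≤ LinearMap.ker f := by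
    intro x hx
    rw [LinearMap.mem_ker]
    funext i
    have hx' : (x : V) ∈ Cn φ W m := hx
    show ((Submodule.comap (Uo i).subtype (Cn (ψ i) (Uo i) m)).mkQ) (toU i x) = 0
    rw [Submodule.mkQ_apply, Submodule.Quotient.mk_eq_zero, Submodule.mem_comap]
    have hval : (Uo i).subtype ((toU i) x) = (N i).mkQ (x : V) := rfl
    rw [hval]
    rw [mem_Cn]
    intro k hk
    have h1 : (φ ^ k) (x : V) ∈ W := (mem_Cn φ W).1 hx' k hk
    have h2 : (ψ i ^ k) ((N i).mkQ (x : V)) = (N i).mkQ ((φ ^ k) (x : V)) := by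
      rw [Submodule.mkQ_apply, Submodule.mkQ_apply]
      exact mapQ_pow φ (N i) (hinv i) k (x : V)
    rw [h2]
    exact hWle i h1
  have hsurj : Function.Surjective f := by
    intro y
    have hu : ∀ i, ∃ u : ↥(Uo i), Submodule.Quotient.mk u = y i := fun i =>
      Submodule.Quotient.mk_surjective _ (y i)
    choose u hu using hu
    have hw : ∀ i, ∃ w : V, Submodule.Quotient.mk w = ((u i : ↥(Uo i)) : V ⧸ N i) := fun i =>
      Submodule.Quotient.mk_surjective _ _
    choose w hw using hw
    obtain ⟨v, hv⟩ := crt N hco w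
    have hmkv : ∀ i, (N i).mkQ v = ((u i : ↥(Uo i)) : V ⧸ N i) := by
      intro i
      rw [Submodule.mkQ_apply, ← hw i]
      exact (Submodule.Quotient.eq (N i)).2 (hv i)
    have hvW : v ∈ W := by
      rw [hW, Submodule.mem_iInf]
      intro i
      rw [Submodule.mem_comap, hmkv i]
      exact (u i).2
    refine ⟨⟨v, hvW⟩, ?_⟩
    funext i
    show ((Submodule.comap (Uo i).subtype (Cn (ψ i) (Uo i) m)).mkQ) (toU i ⟨v, hvW⟩) = y i
    have : toU i ⟨v, hvW⟩ = u i := by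
      apply Subtype.ext
      show (N i).mkQ v = _
      exact hmkv i
    rw [this, Submodule.mkQ_apply, hu i]
  set F : (↥W ⧸ Submodule.comap W.subtype (Cn φ W m)) →ₗ[𝕂]
      Π i, (↥(Uo i) ⧸ Submodule.comap (Uo i).subtype (Cn (ψ i) (Uo i) m)) :=
    LinearMap.pi (fun i => (Submodule.comap W.subtype (Cn φ W m)).liftQ
      (((Submodule.comap (Uo i).subtype (Cn (ψ i) (Uo i) m)).mkQ).comp (toU i))
      (fun x hx => congrFun (LinearMap.mem_ker.1 (hker hx)) i)) with hF
  have hFsurj : Function.Surjective F := by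
    intro y
    obtain ⟨x, hx⟩ := hsurj y
    exact ⟨Submodule.Quotient.mk x, by rw [← hx]; rfl⟩
  exact LinearMap.rank_le_of_surjective F hFsurj

end PartB

/-- Let `(V,φ)` be a topological flow with completely positive
topological entropy and `V ≠ 0`.  Then (a) `V` has no proper open `φ`-invariant
`𝕂`-subspaces; (b) every finite coindependent set of proper closed `φ`-invariant
`𝕂`-subspaces of `V` has cardinality at most `ent*(V,φ)`. -/
theorem stmt_13 {𝕂 V : Type*} [Field 𝕂] [TopologicalSpace 𝕂] [DiscreteTopology 𝕂]
    [AddCommGroup V] [Module 𝕂 V] [TopologicalSpace V] [IsTopologicalAddGroup V]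
    [ContinuousSMul 𝕂 V] [Nontrivial V]
    (hV : IsLinearlyCompact 𝕂 V) (φ : V →ₗ[𝕂] V) (hφ : Continuous φ)
    (hcp : CompletelyPositiveEntStar 𝕂 V φ) :
    (∀ U : Submodule 𝕂 V, IsOpen (U : Set V) → (∀ x ∈ U, φ x ∈ U) → U = ⊤) ∧
    ∀ S : Finset (Submodule 𝕂 V),
      (∀ N ∈ S, IsClosed (N : Set V) ∧ (∀ x ∈ N, φ x ∈ N) ∧ N ≠ ⊤) →
      Coindependent 𝕂 (fun N : {x // x ∈ S} => (N : Submodule 𝕂 V)) →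
      (S.card : ℝ≥0∞) ≤ entStar 𝕂 V φ := by
  constructor
  · -- part (a)
    intro U hUopen hUinv
    by_contra hne
    have hUinv' : U ≤ U.comap φ := fun x hx => hUinv x hx
    have hclosed : IsClosed (U : Set V) :=
      AddSubgroup.isClosed_of_isOpen U.toAddSubgroup hUopen
    haveI := finite_quotient_of_isOpen hV U hUopen
    exact hcp U hclosed hUinv' hne (entStar_eq_zero_of_finite _)
  · -- part (b)
    intro S hS hco
    classical
    set ι := {x // x ∈ S} with hι
    set N : ι → Submodule 𝕂 V := fun i => (i : Submodule 𝕂 V) with hNdef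
    have hinv : ∀ i : ι, N i ≤ (N i).comap φ := fun i x hx => (hS i i.2).2.1 x hx
    set ψ : ∀ i : ι, (V ⧸ N i) →ₗ[𝕂] (V ⧸ N i) := fun i =>
      Submodule.mapQ (N i) (N i) φ (hinv i) with hψ
    have hent : ∀ i : ι, entStar 𝕂 (V ⧸ N i) (ψ i) ≠ 0 := fun i =>
      hcp (N i) (hS i i.2).1 (hinv i) (hS i i.2).2.2
    have hUo : ∀ i : ι, ∃ Uo : Submodule 𝕂 (V ⧸ N i),
        IsOpen (Uo : Set (V ⧸ N i)) ∧ HStar (ψ i) Uo ≠ 0 := by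
      intro i
      by_contra hcon
      push_neg at hcon
      refine hent i (le_antisymm ?_ zero_le)
      refine iSup₂_le fun Uo hUoopen => ?_
      exact le_of_eq (hcon Uo hUoopen)
    choose Uo hUoopen hUone using hUo
    set W : Submodule 𝕂 V := ⨅ i : ι, Submodule.comap (N i).mkQ (Uo i) with hW
    have hWopen : IsOpen (W : Set V) := by
      rw [hW, Submodule.coe_iInf]
      refine isOpen_iInter_of_finite fun i => ?_
      rw [Submodule.comap_coe]
      exact (continuous_quot_mk.comp continuous_id).isOpen_preimage _ (hUoopen i)
    set k := S.card with hk
    have hcard : (Cardinal.mk ι : Cardinal) = (k : Cardinal) := by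
      rw [Cardinal.mk_fintype, Fintype.card_coe]
    -- rank lower bound
    have hrank : ∀ m : ℕ, ((k * m : ℕ) : Cardinal) ≤
        Module.rank 𝕂 (↥W ⧸ Submodule.comap W.subtype (Cn φ W (m + 1))) := by
      intro m
      have h1 := rank_prod_le φ N hinv hco Uo (m + 1)
      have h2 : Cardinal.sum (fun i : ι => (m : Cardinal)) ≤
          Cardinal.sum (fun i : ι => Module.rank 𝕂 (↥(Uo i) ⧸ Submodule.comap (Uo i).subtype
            (Cn (ψ i) (Uo i) (m + 1)))) :=
        Cardinal.sum_le_sum _ _ (fun i => key_rank_lb (ψ i) (Uo i) (hUone i) m)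
      have h3 : Module.rank 𝕂 (Π i : ι, (↥(Uo i) ⧸ Submodule.comap (Uo i).subtype
          (Cn (ψ i) (Uo i) (m + 1)))) =
          Cardinal.sum (fun i : ι => Module.rank 𝕂 (↥(Uo i) ⧸ Submodule.comap (Uo i).subtype
            (Cn (ψ i) (Uo i) (m + 1)))) := by
          haveI := fun i : ι => Module.Free.of_divisionRing 𝕂 (↥(Uo i) ⧸ Submodule.comap (Uo i).subtype
            (Cn (ψ i) (Uo i) (m + 1)))
          exact rank_pi
      have h4 : Cardinal.sum (fun i : ι => (m : Cardinal)) = ((k * m : ℕ) : Cardinal) := by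
        rw [Cardinal.sum_const, Cardinal.lift_id, Cardinal.lift_natCast, hcard]
        push_cast
        ring
      calc ((k * m : ℕ) : Cardinal) = Cardinal.sum (fun i : ι => (m : Cardinal)) := h4.symm
        _ ≤ _ := h2
        _ = Module.rank 𝕂 (Π i : ι, (↥(Uo i) ⧸ Submodule.comap (Uo i).subtype
            (Cn (ψ i) (Uo i) (m + 1)))) := h3.symm
        _ ≤ _ := h1
    -- entropy lower bound
    have hterm : ∀ j : ℕ, 1 ≤ j → (k : ℝ≥0∞) - (k : ℝ≥0∞) / (j : ℝ≥0∞) ≤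
        (((Module.rank 𝕂 (↥W ⧸ Submodule.comap W.subtype (Cn φ W j))).toENat : ℕ∞) : ℝ≥0∞) /
          (j : ℝ≥0∞) := by
      intro j hj
      obtain ⟨m, rfl⟩ : ∃ m, j = m + 1 := ⟨j - 1, by omega⟩
      have h1 := hrank m
      have h2 : ((k * m : ℕ) : ℕ∞) ≤
          (Module.rank 𝕂 (↥W ⧸ Submodule.comap W.subtype (Cn φ W (m + 1)))).toENat :=
        (Cardinal.enat_gc _ _).1 (by simpa using h1)
      have h3 : ((k * m : ℕ) : ℝ≥0∞) ≤
          (((Module.rank 𝕂 (↥W ⧸ Submodule.comap W.subtype (Cn φ W (m + 1)))).toENat : ℕ∞) :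
            ℝ≥0∞) := by
        calc ((k * m : ℕ) : ℝ≥0∞) = (((k * m : ℕ) : ℕ∞) : ℝ≥0∞) := by simp
          _ ≤ _ := ENat.toENNReal_le.2 h2
      have h4 : ((k * m : ℕ) : ℝ≥0∞) / ((m + 1 : ℕ) : ℝ≥0∞) ≤
          (((Module.rank 𝕂 (↥W ⧸ Submodule.comap W.subtype (Cn φ W (m + 1)))).toENat : ℕ∞) :
            ℝ≥0∞) / ((m + 1 : ℕ) : ℝ≥0∞) := ENNReal.div_le_div_right h3 _
      refine le_trans ?_ (le_trans h4 (by push_cast; exact le_rfl))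
      -- k - k/(m+1) ≤ k*m/(m+1)
      rw [tsub_le_iff_right]
      have hne0 : ((m + 1 : ℕ) : ℝ≥0∞) ≠ 0 := by
        simp
      have hnetop : ((m + 1 : ℕ) : ℝ≥0∞) ≠ ⊤ := ENNReal.natCast_ne_top _
      rw [ENNReal.div_add_div_same]
      have : ((k * m : ℕ) : ℝ≥0∞) + (k : ℝ≥0∞) = (k : ℝ≥0∞) * ((m + 1 : ℕ) : ℝ≥0∞) := by
        push_cast; ring
      rw [this, mul_div_assoc, ENNReal.div_self hne0 hnetop, mul_one]
    have hL : Filter.Tendsto (fun j : ℕ => (k : ℝ≥0∞) - (k : ℝ≥0∞) / (j : ℝ≥0∞))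
        Filter.atTop (nhds (k : ℝ≥0∞)) := by
      have h0 : Filter.Tendsto (fun j : ℕ => (k : ℝ≥0∞) / (j : ℝ≥0∞)) Filter.atTop (nhds 0) :=
        tendsto_const_div_nat _ (ENNReal.natCast_ne_top k)
      have := ENNReal.Tendsto.sub (tendsto_const_nhds
        (x := (k : ℝ≥0∞)) (f := Filter.atTop)) h0 (Or.inl (ENNReal.natCast_ne_top k))
      simpa using this
    have hHW : (k : ℝ≥0∞) ≤ HStar φ W := by
      have hev : (fun j : ℕ => (k : ℝ≥0∞) - (k : ℝ≥0∞) / (j : ℝ≥0∞)) ≤ᶠ[Filter.atTop]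
          (fun j : ℕ =>
            (((Module.rank 𝕂 (↥W ⧸ Submodule.comap W.subtype (Cn φ W j))).toENat : ℕ∞) : ℝ≥0∞) /
              (j : ℝ≥0∞)) := by
        filter_upwards [Filter.eventually_ge_atTop 1] with j hj
        exact hterm j hj
      calc (k : ℝ≥0∞) = Filter.atTop.limsup
            (fun j : ℕ => (k : ℝ≥0∞) - (k : ℝ≥0∞) / (j : ℝ≥0∞)) := hL.limsup_eq.symm
        _ ≤ _ := Filter.limsup_le_limsup hev
    exact le_trans hHW (le_iSup₂ (f := fun (U : Submodule 𝕂 V) (_ : IsOpen (U : Set V)) =>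
      HStar φ U) W hWopen)
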